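/- With ψ as above on Ω_W (W > 0), φ(W) := ∫_{Ω_W} |∇ψ|² satisfies φ(W) · W² → 2/3 as W → 0⁺. -/

import Mathlib

/-- Integral of a cubic polynomial from 0 to b. -/
lemma int_cubic (C D E F b : ℝ) :
    ∫ x in (0:ℝ)..b, (C + D*x + E*x^2 + F*x^3)
      = C*b + D*b^2/2 + E*b^3/3 + F*b^4/4 := by
  have h : ∀ x ∈ Set.uIcc (0:ℝ) b,
      HasDerivAt (fun x : ℝ => C*x^1 + D*x^2/2 + (E*x^3/3 + F*x^4/4))
        (C + D*x + E*x^2 + F*x^3) x := by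
    intro x _
    have h1 := (((hasDerivAt_pow 1 x).const_mul C).add
        (((hasDerivAt_pow 2 x).const_mul D).div_const 2)).add
      ((((hasDerivAt_pow 3 x).const_mul E).div_const 3).add
        (((hasDerivAt_pow 4 x).const_mul F).div_const 4))
    refine h1.congr_deriv ?_
    ring
  rw [intervalIntegral.integral_eq_sub_of_hasDerivAt h
      ((Continuous.intervalIntegrable (by continuity) _ _))]
  ring

/-- Closed form for the double integral. -/
lemma phi_val (a c W : ℝ) (hW : W ≠ 0) :
    (∫ x₁ in (0:ℝ)..W, ∫ x₂ in (0:ℝ)..(1 - x₁ / W),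
        ((a + c * x₁) ^ 2 + (a + c * x₂) ^ 2))
      = a^2*W + a*c*W*(1+W)/3 + c^2*W*(1+W^2)/12 := by
  have inner : ∀ x₁ : ℝ,
      (∫ x₂ in (0:ℝ)..(1 - x₁ / W), ((a + c * x₁) ^ 2 + (a + c * x₂) ^ 2))
        = ((a + c*x₁)^2 + a^2)*(1 - x₁/W) + (2*a*c)*(1 - x₁/W)^2/2
            + c^2*(1 - x₁/W)^3/3 + 0*(1 - x₁/W)^4/4 := by
    intro x₁
    have h1 : (fun x₂ : ℝ => (a + c * x₁) ^ 2 + (a + c * x₂) ^ 2)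
        = fun x₂ => ((a + c*x₁)^2 + a^2) + (2*a*c)*x₂ + c^2*x₂^2 + 0*x₂^3 := by
      funext x₂; ring
    rw [h1, int_cubic]
  simp only [inner]
  have h2 : (fun x₁ : ℝ => ((a + c*x₁)^2 + a^2)*(1 - x₁/W) + (2*a*c)*(1 - x₁/W)^2/2
        + c^2*(1 - x₁/W)^3/3 + 0*(1 - x₁/W)^4/4)
      = fun x₁ => (2*a^2 + a*c + c^2/3)
          + (2*a*c - 2*a^2/W - 2*a*c/W - c^2/W)*x₁
          + (c^2 - 2*a*c/W + a*c/W^2 + c^2/W^2)*x₁^2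
          + (-c^2/W - c^2/(3*W^3))*x₁^3 := by
    funext x₁; ring
  rw [h2, int_cubic]
  field_simp
  ring

theorem stmt_13 :
    let φ : ℝ → ℝ := fun W =>
      ∫ x₁ in (0:ℝ)..W, ∫ x₂ in (0:ℝ)..(1 - x₁ / W),
        ((Real.sqrt (2 / W) +
            2 * (-Real.sqrt (1 / (2 * W)) * (1 + W + Real.sqrt (1 + W ^ 2)) / W) * x₁) ^ 2 +
         (Real.sqrt (2 / W) +
            2 * (-Real.sqrt (1 / (2 * W)) * (1 + W + Real.sqrt (1 + W ^ 2)) / W) * x₂) ^ 2)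
    Filter.Tendsto (fun W => W ^ 2 * φ W) (nhdsWithin 0 (Set.Ioi 0)) (nhds (2 / 3)) := by
  intro φ
  set g : ℝ → ℝ := fun W =>
    2*W^2 - 2/3*(1 + W + Real.sqrt (1 + W^2))*(1+W)*W
      + (1 + W + Real.sqrt (1 + W^2))^2*(1+W^2)/6 with hg
  have hgt : Filter.Tendsto g (nhdsWithin 0 (Set.Ioi 0)) (nhds (2 / 3)) := by
    have hc : ContinuousAt g 0 := by
      apply ContinuousAt.add
      · fun_prop
      · fun_prop
    have h0 : g 0 = 2 / 3 := by
      simp only [hg]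
      norm_num [Real.sqrt_one]
    have := hc.tendsto.mono_left (nhdsWithin_le_nhds (s := Set.Ioi (0:ℝ)))
    rwa [h0] at this
  refine hgt.congr' ?_
  filter_upwards [eventually_mem_nhdsWithin] with W hW
  have hW0 : (0:ℝ) < W := hW
  have hWne : W ≠ 0 := ne_of_gt hW0
  set K := 1 + W + Real.sqrt (1 + W^2) with hK
  set a := Real.sqrt (2 / W) with ha
  set s := Real.sqrt (1 / (2 * W)) with hs
  set c := 2 * (-s * K / W) with hc
  have has : a * s = 1 / W := by
    rw [ha, hs, ← Real.sqrt_mul (by positivity)]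
    rw [show (2 / W) * (1 / (2 * W)) = (1/W)^2 by field_simp]
    exact Real.sqrt_sq (by positivity)
  have ha2 : a ^ 2 = 2 / W := Real.sq_sqrt (by positivity)
  have hs2 : s ^ 2 = 1 / (2 * W) := Real.sq_sqrt (by positivity)
  have hac : a * c = -2 * K / W^2 := by
    rw [hc]
    have : a * (2 * (-s * K / W)) = -2 * (a * s) * K / W := by ring
    rw [this, has]; field_simp
  have hc2 : c ^ 2 = 2 * K^2 / W^3 := by
    rw [hc]
    have : (2 * (-s * K / W))^2 = 4 * s^2 * K^2 / W^2 := by ring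
    rw [this, hs2]; field_simp; ring
  have hφ : φ W = a^2*W + a*c*W*(1+W)/3 + c^2*W*(1+W^2)/12 := phi_val a c W hWne
  rw [hg]
  show 2*W^2 - 2/3*K*(1+W)*W + K^2*(1+W^2)/6 = W ^ 2 * φ W
  rw [hφ, ha2, hac, hc2]
  field_simp
  ring
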